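/- Let {f_i}_{i∈I} be a frame for a Hilbert space H with frame operator S and canonical dual frame {f̃_i}_{i∈I}, where f̃_i = S⁻¹f_i. Then for every subset J ⊆ I and every f ∈ H: ∑_{i∈J} |⟨f, f_i⟩|² − ∑_{i∈I} |⟨S_J f, f̃_i⟩|² = ∑_{i∈J^c} |⟨f, f_i⟩|² − ∑_{i∈I} |⟨S_{J^c} f, f̃_i⟩|², where J^c = I \ J. -/

import Mathlib

open scoped InnerProductSpace

private lemma aux_re (z : ℂ) : (z * (starRingEnd ℂ) z).re = ‖z‖ ^ 2 := by
  simp [Complex.mul_conj, Complex.normSq_eq_norm_sq, ← Complex.ofReal_pow]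

/-- Fundamental identity for general frames (Theorem TT): for a frame `{f_i}` with frame
operator `S`, canonical dual `f̃_i = S⁻¹ f_i`, and partial frame operators `S_J`, `S_{J^c}`:
`∑_{i∈J} |⟨x,f_i⟩|² − ∑_{i∈I} |⟨S_J x, f̃_i⟩|² = ∑_{i∈J^c} |⟨x,f_i⟩|² − ∑_{i∈I} |⟨S_{J^c} x, f̃_i⟩|²`. -/
theorem stmt_4 {H : Type*} [NormedAddCommGroup H] [InnerProductSpace ℂ H] [CompleteSpace H]
    {ι : Type*} (f : ι → H) (A B : ℝ) (hA : 0 < A) (hAB : A ≤ B)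
    (hframe : ∀ x : H, Summable (fun i => ‖⟪f i, x⟫_ℂ‖ ^ 2) ∧
      A * ‖x‖ ^ 2 ≤ ∑' i, ‖⟪f i, x⟫_ℂ‖ ^ 2 ∧ ∑' i, ‖⟪f i, x⟫_ℂ‖ ^ 2 ≤ B * ‖x‖ ^ 2)
    (S Sinv : H →L[ℂ] H) (hS : ∀ x : H, HasSum (fun i => ⟪f i, x⟫_ℂ • f i) (S x))
    (hinv₁ : S * Sinv = 1) (hinv₂ : Sinv * S = 1)
    (J : Set ι) (SJ SJc : H →L[ℂ] H)
    (hSJ : ∀ x : H, HasSum (fun i : J => ⟪f i, x⟫_ℂ • f i) (SJ x))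
    (hSJc : ∀ x : H, HasSum (fun i : ↥Jᶜ => ⟪f i, x⟫_ℂ • f i) (SJc x)) :
    ∀ x : H,
      (∑' i : J, ‖⟪f i, x⟫_ℂ‖ ^ 2) - ∑' i, ‖⟪Sinv (f i), SJ x⟫_ℂ‖ ^ 2 =
      (∑' i : ↥Jᶜ, ‖⟪f i, x⟫_ℂ‖ ^ 2) - ∑' i, ‖⟪Sinv (f i), SJc x⟫_ℂ‖ ^ 2 := by
  intro x
  have hSSinv : ∀ a : H, S (Sinv a) = a := fun a => by
    have := congrFun (congrArg (DFunLike.coe) hinv₁) a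
    simpa using this
  have hSinvS : ∀ a : H, Sinv (S a) = a := fun a => by
    have := congrFun (congrArg (DFunLike.coe) hinv₂) a
    simpa using this
  -- S is symmetric
  have hSsym : ∀ a b : H, ⟪S a, b⟫_ℂ = ⟪a, S b⟫_ℂ := by
    intro a b
    have h1 : HasSum (fun i => ⟪b, ⟪f i, a⟫_ℂ • f i⟫_ℂ) ⟪b, S a⟫_ℂ :=
      (innerSL ℂ b).hasSum (hS a)
    have h2 : HasSum (fun i => ⟪a, ⟪f i, b⟫_ℂ • f i⟫_ℂ) ⟪a, S b⟫_ℂ :=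
      (innerSL ℂ a).hasSum (hS b)
    have h1' : HasSum (fun i => (starRingEnd ℂ) ⟪b, ⟪f i, a⟫_ℂ • f i⟫_ℂ)
        ((starRingEnd ℂ) ⟪b, S a⟫_ℂ) := h1.star
    have heq : (fun i => (starRingEnd ℂ) ⟪b, ⟪f i, a⟫_ℂ • f i⟫_ℂ)
        = fun i => ⟪a, ⟪f i, b⟫_ℂ • f i⟫_ℂ := by
      funext i
      simp only [inner_smul_right, map_mul, ← inner_conj_symm (f i)]
      rw [← inner_conj_symm b (f i)]
      ring_nf
      rw [inner_conj_symm, inner_conj_symm]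
      ring
    rw [heq] at h1'
    have h3 := h1'.unique h2
    rw [← h3, inner_conj_symm]
  -- Sinv is symmetric
  have hPsym : ∀ a b : H, ⟪Sinv a, b⟫_ℂ = ⟪a, Sinv b⟫_ℂ := by
    intro a b
    calc ⟪Sinv a, b⟫_ℂ = ⟪Sinv a, S (Sinv b)⟫_ℂ := by rw [hSSinv]
    _ = ⟪S (Sinv a), Sinv b⟫_ℂ := (hSsym _ _).symm
    _ = ⟪a, Sinv b⟫_ℂ := by rw [hSSinv]
  -- full sum evaluation
  have key : ∀ w : H, ∑' i, ‖⟪f i, w⟫_ℂ‖ ^ 2 = Complex.re ⟪w, S w⟫_ℂ := by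
    intro w
    have h := (innerSL ℂ w).hasSum (hS w)
    have h2 := Complex.reCLM.hasSum h
    simp only [innerSL_apply_apply, Complex.reCLM_apply, inner_smul_right] at h2
    have heq : (fun i => (⟪f i, w⟫_ℂ * ⟪w, f i⟫_ℂ).re) = fun i => ‖⟪f i, w⟫_ℂ‖ ^ 2 := by
      funext i
      rw [← inner_conj_symm w (f i)]
      exact aux_re _
    rw [heq] at h2
    exact h2.tsum_eq
  have keyJ : ∑' i : J, ‖⟪f i, x⟫_ℂ‖ ^ 2 = Complex.re ⟪x, SJ x⟫_ℂ := by
    have h := (innerSL ℂ x).hasSum (hSJ x)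
    have h2 := Complex.reCLM.hasSum h
    simp only [innerSL_apply_apply, Complex.reCLM_apply, inner_smul_right] at h2
    have heq : (fun i : J => (⟪f i, x⟫_ℂ * ⟪x, f i⟫_ℂ).re) = fun i : J => ‖⟪f i, x⟫_ℂ‖ ^ 2 := by
      funext i
      rw [← inner_conj_symm x (f i)]
      exact aux_re _
    rw [heq] at h2
    exact h2.tsum_eq
  have keyJc : ∑' i : ↥Jᶜ, ‖⟪f i, x⟫_ℂ‖ ^ 2 = Complex.re ⟪x, SJc x⟫_ℂ := by
    have h := (innerSL ℂ x).hasSum (hSJc x)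
    have h2 := Complex.reCLM.hasSum h
    simp only [innerSL_apply_apply, Complex.reCLM_apply, inner_smul_right] at h2
    have heq : (fun i : ↥Jᶜ => (⟪f i, x⟫_ℂ * ⟪x, f i⟫_ℂ).re)
        = fun i : ↥Jᶜ => ‖⟪f i, x⟫_ℂ‖ ^ 2 := by
      funext i
      rw [← inner_conj_symm x (f i)]
      exact aux_re _
    rw [heq] at h2
    exact h2.tsum_eq
  -- dual sums
  have dual : ∀ y : H, ∑' i, ‖⟪Sinv (f i), y⟫_ℂ‖ ^ 2 = Complex.re ⟪Sinv y, y⟫_ℂ := by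
    intro y
    have h1 : (fun i => ‖⟪Sinv (f i), y⟫_ℂ‖ ^ 2) = fun i => ‖⟪f i, Sinv y⟫_ℂ‖ ^ 2 := by
      funext i; rw [hPsym]
    rw [h1, key (Sinv y), hSSinv]
  -- decomposition S x = SJ x + SJc x
  have hsplit : S x = SJ x + SJc x := by
    have h : HasSum (fun i => ⟪f i, x⟫_ℂ • f i) (SJ x + SJc x) :=
      HasSum.add_compl (f := fun i => ⟪f i, x⟫_ℂ • f i) (s := J) (hSJ x) (hSJc x)
    exact (hS x).unique h
  rw [keyJ, keyJc, dual, dual]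
  have hc : SJc x = S x - SJ x := by rw [hsplit]; abel
  have e1 : ⟪Sinv (SJc x), SJc x⟫_ℂ
      = ⟪x, S x⟫_ℂ - ⟪x, SJ x⟫_ℂ - ⟪SJ x, x⟫_ℂ + ⟪Sinv (SJ x), SJ x⟫_ℂ := by
    rw [hc, map_sub, hSinvS, inner_sub_left, inner_sub_right, inner_sub_right]
    have h3 : ⟪Sinv (SJ x), S x⟫_ℂ = ⟪SJ x, x⟫_ℂ := by
      rw [← hSsym, hSSinv]
    rw [h3]
    ring
  rw [e1]
  have e2 : Complex.re ⟪SJ x, x⟫_ℂ = Complex.re ⟪x, SJ x⟫_ℂ :=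
    inner_re_symm (𝕜 := ℂ) (SJ x) x
  have e3 : Complex.re ⟪x, S x⟫_ℂ = Complex.re ⟪x, SJ x⟫_ℂ + Complex.re ⟪x, SJc x⟫_ℂ := by
    rw [hsplit, inner_add_right]; simp
  simp only [Complex.sub_re, Complex.add_re]
  linarith [e2, e3]
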